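/- For a stopping time τ on a finite sample space and for every c > 0 such that β(x^τ) = c for some x^τ compatible with τ, the likelihood ratio of the event {β(X^τ) = c} under H1 versus H0 equals c, i.e., P(β(X^τ)=c | H1)/P(β(X^τ)=c | H0) = c (calibration of the Bayes factor under optional stopping). -/

import Mathlib

open MeasureTheory
open scoped ENNReal


namespace CalibAux

variable {Ω : Type*} [MeasurableSpace Ω]

/-- Two points are related if no measurable set separates them. -/
def R (a b : Ω) : Prop := ∀ B : Set Ω, MeasurableSet B → (a ∈ B ↔ b ∈ B)

lemma R.rfl {a : Ω} : R a a := fun _ _ => Iff.rfl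
lemma R.symm {a b : Ω} (h : R a b) : R b a := fun B hB => (h B hB).symm
lemma R.trans {a b c : Ω} (h1 : R a b) (h2 : R b c) : R a c :=
  fun B hB => (h1 B hB).trans (h2 B hB)

/-- Measurable saturation: the smallest measurable superset (in a finite space). -/
def sat (A : Set Ω) : Set Ω := ⋂₀ {B | MeasurableSet B ∧ A ⊆ B}

lemma subset_sat (A : Set Ω) : A ⊆ sat A := fun a ha B hB => hB.2 ha

lemma sat_subset {A B : Set Ω} (hB : MeasurableSet B) (hAB : A ⊆ B) : sat A ⊆ B :=
  fun y hy => hy B ⟨hB, hAB⟩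

lemma measurableSet_sat [Finite Ω] (A : Set Ω) : MeasurableSet (sat A) :=
  MeasurableSet.sInter (Set.to_countable _) (fun _ hB => hB.1)

lemma sat_mono [Finite Ω] {A B : Set Ω} (h : A ⊆ B) : sat A ⊆ sat B :=
  sat_subset (measurableSet_sat B) (h.trans (subset_sat B))

lemma mem_sat_of_R {A : Set Ω} {a y : Ω} (ha : a ∈ A) (h : R a y) : y ∈ sat A :=
  fun B hB => (h B hB.1).mp (hB.2 ha)

lemma exists_of_mem_sat [Finite Ω] {A : Set Ω} {y : Ω} (hy : y ∈ sat A) :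
    ∃ a ∈ A, R a y := by
  by_contra h
  push_neg at h
  have key : ∀ a : Ω, ∃ B : Set Ω, MeasurableSet B ∧ (a ∈ A → a ∈ B ∧ y ∉ B) := by
    intro a
    by_cases ha : a ∈ A
    · have := h a ha
      unfold R at this
      push_neg at this
      obtain ⟨B, hB, hiff⟩ := this
      rcases hiff with ⟨haB, hyB⟩ | ⟨haB, hyB⟩
      · exact ⟨B, hB, fun _ => ⟨haB, hyB⟩⟩
      · exact ⟨Bᶜ, hB.compl, fun _ => ⟨haB, fun hc => hc hyB⟩⟩
    · exact ⟨∅, MeasurableSet.empty, fun ha' => absurd ha' ha⟩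
  choose f hfm hfi using key
  have hmeas : MeasurableSet (⋃ a ∈ A, f a) :=
    MeasurableSet.biUnion (Set.to_countable A) (fun a _ => hfm a)
  have hsub : A ⊆ ⋃ a ∈ A, f a := fun a ha => Set.mem_biUnion ha (hfi a ha).1
  have hmem := sat_subset hmeas hsub hy
  simp only [Set.mem_iUnion] at hmem
  obtain ⟨a, ha, hyB⟩ := hmem
  exact (hfi a ha).2 hyB

lemma measure_sat [Finite Ω] (μ : Measure Ω) (A : Set Ω) : μ (sat A) = μ A := by
  refine le_antisymm ?_ (measure_mono (subset_sat A))
  have h1 : μ (sat A) ≤ ⨅ (t) (_ : A ⊆ t) (_ : MeasurableSet t), μ t :=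
    le_iInf fun t => le_iInf fun hAt => le_iInf fun ht =>
      measure_mono (sat_subset ht hAt)
  rwa [← measure_eq_iInf A] at h1

/-- On a pi type, pointwise inseparability implies inseparability. -/
lemma R_pi {X : Type*} [MeasurableSpace X] {T : ℕ} {a b : Fin T → X}
    (h : ∀ i, R (a i) (b i)) : R a b := by
  intro B hB
  let m' : MeasurableSpace (Fin T → X) :=
    { MeasurableSet' := fun s => a ∈ s ↔ b ∈ s
      measurableSet_empty := Iff.rfl
      measurableSet_compl := fun s hs => not_iff_not.mpr hs
      measurableSet_iUnion := fun f hf => by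
        simp only [Set.mem_iUnion]
        exact ⟨fun ⟨i, hi⟩ => ⟨i, (hf i).mp hi⟩, fun ⟨i, hi⟩ => ⟨i, (hf i).mpr hi⟩⟩ }
  have hle : (MeasurableSpace.pi : MeasurableSpace (Fin T → X)) ≤ m' := by
    refine iSup_le fun i => ?_
    rintro s ⟨E, hE, rfl⟩
    exact h i E hE
  exact hle B hB

/-- Coordinates of inseparable points are inseparable. -/
lemma R_apply {X : Type*} [MeasurableSpace X] {T : ℕ} {a b : Fin T → X}
    (h : R a b) (i : Fin T) : R (a i) (b i) :=
  fun E hE => h ((fun f => f i) ⁻¹' E) (measurable_pi_apply i hE)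

/-- Measure of a union of a laminar family of measurable sets with fixed likelihood ratio. -/
lemma laminar_measure {Ω : Type*} [MeasurableSpace Ω] (μ0 μ1 : Measure Ω) (c : ℝ≥0∞)
    (F : Finset (Set Ω))
    (hmeas : ∀ A ∈ F, MeasurableSet A)
    (hlam : ∀ A ∈ F, ∀ B ∈ F, A ⊆ B ∨ B ⊆ A ∨ Disjoint A B)
    (hc : ∀ A ∈ F, μ1 A = c * μ0 A) :
    μ1 (⋃ A ∈ F, A) = c * μ0 (⋃ A ∈ F, A) := by
  classical
  induction F using Finset.strongInduction with
  | _ F ih =>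
    rcases F.eq_empty_or_nonempty with rfl | hne
    · simp
    · obtain ⟨A, hA, hmax⟩ := F.exists_maximal hne
      set G : Finset (Set Ω) := F.filter (fun B => ¬ B ⊆ A) with hG
      have hGF : G ⊆ F := Finset.filter_subset _ _
      have hAG : A ∉ G := by simp [hG]
      have hGss : G ⊂ F := Finset.ssubset_iff_of_subset hGF |>.mpr ⟨A, hA, hAG⟩
      have hsplit : (⋃ B ∈ F, B) = A ∪ ⋃ B ∈ G, B := by
        ext x
        simp only [Set.mem_iUnion, Set.mem_union]
        constructor
        · rintro ⟨B, hB, hxB⟩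
          by_cases hBA : B ⊆ A
          · exact Or.inl (hBA hxB)
          · exact Or.inr ⟨B, Finset.mem_filter.mpr ⟨hB, hBA⟩, hxB⟩
        · rintro (hxA | ⟨B, hB, hxB⟩)
          · exact ⟨A, hA, hxA⟩
          · exact ⟨B, hGF hB, hxB⟩
      have hdisj : Disjoint A (⋃ B ∈ G, B) := by
        rw [Set.disjoint_iUnion₂_right]
        intro B hB
        have hBF := hGF hB
        have hBnA : ¬ B ⊆ A := (Finset.mem_filter.mp hB).2
        rcases hlam A hA B hBF with h1 | h2 | h3
        · rcases eq_or_lt_of_le h1 with rfl | hlt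
          · exact absurd (subset_rfl) hBnA
          · exact absurd (hmax hBF hlt.le) (not_le_of_gt hlt)
        · exact absurd h2 hBnA
        · exact h3
      have hGmeas : MeasurableSet (⋃ B ∈ G, B) :=
        Finset.measurableSet_biUnion G (fun B hB => hmeas B (hGF hB))
      have hih := ih G hGss (fun B hB => hmeas B (hGF hB))
        (fun B hB B' hB' => hlam B (hGF hB) B' (hGF hB')) (fun B hB => hc B (hGF hB))
      rw [hsplit, measure_union hdisj hGmeas, measure_union hdisj hGmeas,
        hc A hA, hih, mul_add]

end CalibAux

/-- Calibration of the Bayes factor under optional stopping, finite sample space: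
for every `c > 0` attained by the stopped Bayes factor `β(X^τ)`, we have
`P(β(X^τ) = c | H1) / P(β(X^τ) = c | H0) = c`. -/
theorem calibration_simple
    {X : Type*} [Fintype X] [MeasurableSpace X] {T : ℕ}
    (P0 P1 : Measure (Fin T → X)) [IsProbabilityMeasure P0] [IsProbabilityMeasure P1]
    (hfull : ∀ (n : ℕ) (x : Fin T → X), n ≤ T →
      0 < P0 {ω | ∀ i : Fin T, (i : ℕ) < n → ω i = x i} ∧
      0 < P1 {ω | ∀ i : Fin T, (i : ℕ) < n → ω i = x i})
    (τ : (Fin T → X) → ℕ)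
    (hτle : ∀ ω, τ ω ≤ T)
    (hstop : ∀ ω ω', (∀ i : Fin T, (i : ℕ) < τ ω → ω' i = ω i) → τ ω' = τ ω)
    (β : (Fin T → X) → ℝ≥0∞)
    (hβ : ∀ ω, β ω =
      P1 {ω' | ∀ i : Fin T, (i : ℕ) < τ ω → ω' i = ω i} /
        P0 {ω' | ∀ i : Fin T, (i : ℕ) < τ ω → ω' i = ω i})
    (c : ℝ≥0∞) (hc : 0 < c) (hex : ∃ ω, β ω = c) :
    P1 {ω | β ω = c} / P0 {ω | β ω = c} = c := by
  classical
  set cyl : (Fin T → X) → Set (Fin T → X) :=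
    fun ω => {ω' | ∀ i : Fin T, (i : ℕ) < τ ω → ω' i = ω i} with hcyl
  set S : Set (Fin T → X) := {ω | β ω = c} with hSdef
  -- cylinders of points of S are contained in S
  have hcyleq : ∀ ω ω', ω' ∈ cyl ω → cyl ω' = cyl ω := by
    intro ω ω' hω'
    have hττ : τ ω' = τ ω := hstop ω ω' hω'
    ext x
    simp only [hcyl, Set.mem_setOf_eq, hττ]
    exact ⟨fun hx i hi => (hx i hi).trans (hω' i hi), fun hx i hi => (hx i hi).trans (hω' i hi).symm⟩
  have hβconst : ∀ ω ω', ω' ∈ cyl ω → β ω' = β ω := by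
    intro ω ω' hω'
    rw [hβ ω', hβ ω]
    have : cyl ω' = cyl ω := hcyleq ω ω' hω'
    simp only [hcyl] at this
    rw [this]
  have hcylsub : ∀ ω ∈ S, cyl ω ⊆ S := fun ω hω ω' hω' => (hβconst ω ω' hω').trans hω
  have hmemcyl : ∀ ω, ω ∈ cyl ω := fun ω i _ => rfl
  -- positivity / ratio on cylinders
  have hpos : ∀ ω, 0 < P0 (cyl ω) ∧ 0 < P1 (cyl ω) := fun ω => hfull (τ ω) ω (hτle ω)
  have hratio : ∀ ω ∈ S, P1 (cyl ω) = c * P0 (cyl ω) := by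
    intro ω hω
    have hβω : P1 (cyl ω) / P0 (cyl ω) = c := (hβ ω).symm.trans hω
    rw [← hβω]
    exact (ENNReal.div_mul_cancel (hpos ω).1.ne' (measure_ne_top P0 _)).symm
  -- nesting of saturations of cylinders
  have hnest : ∀ ω1 ω2, τ ω1 ≤ τ ω2 →
      ¬ Disjoint (CalibAux.sat (cyl ω1)) (CalibAux.sat (cyl ω2)) →
      CalibAux.sat (cyl ω2) ⊆ CalibAux.sat (cyl ω1) := by
    intro ω1 ω2 hle hnd
    obtain ⟨z, hz1, hz2⟩ := Set.not_disjoint_iff.mp hnd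
    obtain ⟨ωa, hωa, hRa⟩ := CalibAux.exists_of_mem_sat hz1
    obtain ⟨ωb, hωb, hRb⟩ := CalibAux.exists_of_mem_sat hz2
    have hab : CalibAux.R ωa ωb := hRa.trans hRb.symm
    intro y hy
    obtain ⟨ωt, hωt, hRt⟩ := CalibAux.exists_of_mem_sat hy
    set w : Fin T → X := fun i => if (i : ℕ) < τ ω1 then ω1 i else y i with hw
    have hwC : w ∈ cyl ω1 := fun i hi => by simp [hw, hi]
    have hRwy : CalibAux.R w y := by
      apply CalibAux.R_pi
      intro i
      by_cases hi : (i : ℕ) < τ ω1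
      · have hwi : w i = ω1 i := by simp [hw, hi]
        have h1 : ωa i = ω1 i := hωa i hi
        have h2 : ωb i = ω2 i := hωb i (hi.trans_le hle)
        have h3 : ωt i = ω2 i := hωt i (hi.trans_le hle)
        have hR1 : CalibAux.R (ωa i) (ωb i) := CalibAux.R_apply hab i
        have hR2 : CalibAux.R (ωt i) (y i) := CalibAux.R_apply hRt i
        rw [hwi, ← h1]
        rw [h2, ← h3] at hR1
        exact hR1.trans hR2
      · have hwi : w i = y i := by simp [hw, hi]
        rw [hwi]
        exact CalibAux.R.rfl
    exact CalibAux.mem_sat_of_R hwC hRwy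
  -- the finite family of saturated cylinders covering S
  set F : Finset (Set (Fin T → X)) := Finset.image (fun ω => CalibAux.sat (cyl ω)) (Set.toFinite S).toFinset with hF
  have hunion : (⋃ A ∈ F, A) = CalibAux.sat S := by
    apply Set.Subset.antisymm
    · intro x hx
      simp only [hF, Set.mem_iUnion, Finset.mem_image, Set.Finite.mem_toFinset] at hx
      obtain ⟨A, ⟨ω, hω, rfl⟩, hxA⟩ := hx
      exact CalibAux.sat_mono (hcylsub ω hω) hxA
    · intro y hy
      obtain ⟨ω, hω, hR⟩ := CalibAux.exists_of_mem_sat hy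
      have : y ∈ CalibAux.sat (cyl ω) := CalibAux.mem_sat_of_R (hmemcyl ω) hR
      simp only [hF, Set.mem_iUnion, Finset.mem_image, Set.Finite.mem_toFinset]
      exact ⟨_, ⟨ω, hω, rfl⟩, this⟩
  have hkey : P1 (CalibAux.sat S) = c * P0 (CalibAux.sat S) := by
    rw [← hunion]
    apply CalibAux.laminar_measure
    · rintro A hA
      simp only [hF, Finset.mem_image, Set.Finite.mem_toFinset] at hA
      obtain ⟨ω, _, rfl⟩ := hA
      exact CalibAux.measurableSet_sat _
    · rintro A hA B hB
      simp only [hF, Finset.mem_image, Set.Finite.mem_toFinset] at hA hB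
      obtain ⟨ω1, _, rfl⟩ := hA
      obtain ⟨ω2, _, rfl⟩ := hB
      by_cases hd : Disjoint (CalibAux.sat (cyl ω1)) (CalibAux.sat (cyl ω2))
      · exact Or.inr (Or.inr hd)
      · rcases le_total (τ ω1) (τ ω2) with hle | hle
        · exact Or.inr (Or.inl (hnest ω1 ω2 hle hd))
        · exact Or.inl (hnest ω2 ω1 hle (fun h => hd h.symm))
    · rintro A hA
      simp only [hF, Finset.mem_image, Set.Finite.mem_toFinset] at hA
      obtain ⟨ω, hω, rfl⟩ := hA
      rw [CalibAux.measure_sat, CalibAux.measure_sat]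
      exact hratio ω hω
  have hP1S : P1 S = c * P0 S := by
    rw [← CalibAux.measure_sat P1 S, ← CalibAux.measure_sat P0 S]
    exact hkey
  -- conclude
  obtain ⟨ω0, hω0⟩ := hex
  have hω0S : ω0 ∈ S := hω0
  have hS0 : P0 S ≠ 0 :=
    fun h => ((hpos ω0).1.trans_le (measure_mono (hcylsub ω0 hω0S))).ne' h
  show P1 S / P0 S = c
  rw [hP1S, div_eq_mul_inv, mul_assoc, ← div_eq_mul_inv,
    ENNReal.div_self hS0 (measure_ne_top P0 S), mul_one]
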